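/- Let {X_n : n ∈ ℕ} be a process with a 1-max-regenerative structure such that μ := E[Y_1] < ∞, and suppose that P(ζ_0 > max_{1≤k≤n} ζ_k) → 0 as n → ∞. Define G(x) := P(ζ_1 ≤ x)^{1/μ} for x ∈ ℝ. Then sup_{x∈ℝ} |P(M_n ≤ x) − G(x)^n| → 0 as n → ∞, where M_n denotes max{X_k : 1 ≤ k ≤ n}. -/

import Mathlib

open MeasureTheory ProbabilityTheory Filter
open scoped ENNReal Topology

/-- The `k`-th largest element (0-indexed: `k = 0` is the maximum) of a list of reals,
as an extended real; `⊥ = -∞` if the list has at most `k` elements. -/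
noncomputable def kthLargest (l : List ℝ) (k : ℕ) : EReal :=
  ((l.insertionSort (· ≥ ·))[k]?).elim ⊥ (fun a => (a : EReal))

/-- The `(i+1)`-th largest value among `f a, f (a+1), …, f (b-1)` (as an extended real,
`⊥` if the block has at most `i` elements). -/
noncomputable def blockStat (f : ℕ → ℝ) (a b : ℕ) (i : ℕ) : EReal :=
  kthLargest ((List.range (b - a)).map (fun j => f (a + j))) i

lemma kthLargest_zero_le_iff (l : List ℝ) (x : EReal) :
    kthLargest l 0 ≤ x ↔ ∀ y ∈ l, (y : EReal) ≤ x := by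
  have hperm := l.perm_insertionSort (· ≥ ·)
  have hsort := List.pairwise_insertionSort (· ≥ ·) l
  unfold kthLargest
  rcases hs : l.insertionSort (· ≥ ·) with _ | ⟨h, t⟩
  · rw [hs] at hperm
    have hl : l = [] := hperm.symm.eq_nil
    subst hl
    simp [kthLargest]
  · rw [hs] at hperm hsort
    simp only [List.getElem?_cons_zero, Option.elim]
    constructor
    · intro hx y hy
      have : y ∈ h :: t := hperm.mem_iff.2 hy
      rcases List.mem_cons.1 this with rfl | hyt
      · exact hx
      · have hge : h ≥ y := (List.pairwise_cons.1 hsort).1 y hyt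
        exact le_trans (by exact_mod_cast hge) hx
    · intro hall
      exact hall h (hperm.mem_iff.1 (List.mem_cons_self (a := h) (l := t)))

lemma blockStat_zero_le_iff (f : ℕ → ℝ) (a b : ℕ) (x : EReal) :
    blockStat f a b 0 ≤ x ↔ ∀ j, a ≤ j → j < b → (f j : EReal) ≤ x := by
  unfold blockStat
  rw [kthLargest_zero_le_iff]
  constructor
  · intro hl j haj hjb
    have : f j = f (a + (j - a)) := by congr 1; omega
    rw [this]
    exact hl _ (List.mem_map_of_mem (List.mem_range.2 (by omega)))
  · intro hall y hy
    rcases List.mem_map.1 hy with ⟨j, hj, rfl⟩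
    exact hall _ (by omega) (by have := List.mem_range.1 hj; omega)

lemma rpow_gap {t c d : ℝ} (ht0 : 0 ≤ t) (ht1 : t ≤ 1) (hc : 0 < c) (hcd : c ≤ d) :
    t ^ c - t ^ d ≤ (d - c) / c := by
  rcases eq_or_lt_of_le ht0 with h0 | h0
  · rw [← h0, Real.zero_rpow hc.ne', Real.zero_rpow (lt_of_lt_of_le hc hcd).ne']
    have : (0:ℝ) ≤ (d - c)/c := div_nonneg (by linarith) hc.le
    linarith
  · set u := -Real.log t with hu
    have hu0 : 0 ≤ u := by
      rw [hu]
      simpa using Real.log_nonpos ht0 ht1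
    have ht : ∀ e : ℝ, t ^ e = Real.exp (-(e * u)) := by
      intro e
      rw [Real.rpow_def_of_pos h0, hu]
      ring_nf
    rw [ht c, ht d]
    have key : Real.exp (-(c * u)) - Real.exp (-(d * u)) ≤ (d - c) * u * Real.exp (-(c*u)) := by
      have h1 : Real.exp (-(d*u)) = Real.exp (-(c*u)) * Real.exp (-((d-c)*u)) := by
        rw [← Real.exp_add]; ring_nf
      rw [h1]
      have h2 : 1 - Real.exp (-((d-c)*u)) ≤ (d-c)*u := by
        have := Real.add_one_le_exp (-((d-c)*u))
        nlinarith [Real.exp_pos (-((d-c)*u))]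
      calc Real.exp (-(c*u)) - Real.exp (-(c*u)) * Real.exp (-((d-c)*u))
          = Real.exp (-(c*u)) * (1 - Real.exp (-((d-c)*u))) := by ring
        _ ≤ Real.exp (-(c*u)) * ((d-c)*u) := by
            exact mul_le_mul_of_nonneg_left h2 (Real.exp_pos _).le
        _ = (d-c)*u*Real.exp (-(c*u)) := by ring
    have key2 : u * Real.exp (-(c*u)) ≤ 1 / c := by
      have h3 : c * u ≤ Real.exp (c*u) := by
        have := Real.add_one_le_exp (c*u); linarith
      rw [Real.exp_neg]
      rw [mul_inv_le_iff₀ (Real.exp_pos _), div_mul_eq_mul_div, le_div_iff₀ hc]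
      nlinarith [Real.exp_pos (c*u)]
    calc Real.exp (-(c * u)) - Real.exp (-(d * u)) ≤ (d - c) * (u * Real.exp (-(c*u))) := by
          linarith [key]
      _ ≤ (d - c) * (1/c) := mul_le_mul_of_nonneg_left key2 (by linarith)
      _ = (d - c)/c := by ring

section helpers
variable {Ω : Type*} [MeasurableSpace Ω] (P : Measure Ω) [IsProbabilityMeasure P]

lemma prob_toReal_le_one (A : Set Ω) : (P A).toReal ≤ 1 := by
  have := measure_mono (Set.subset_univ A) (μ := P)
  rw [measure_univ] at this
  simpa using ENNReal.toReal_mono ENNReal.one_ne_top this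

lemma prob_le_add2 (A B C : Set Ω) (h : A ⊆ B ∪ C) :
    (P A).toReal ≤ (P B).toReal + (P C).toReal := by
  have h1 : P A ≤ P B + P C := le_trans (measure_mono h) (measure_union_le _ _)
  have := ENNReal.toReal_mono (by finiteness) h1
  rwa [ENNReal.toReal_add (by finiteness) (by finiteness)] at this

lemma prob_le_add3 (A B C D : Set Ω) (h : A ⊆ B ∪ C ∪ D) :
    (P A).toReal ≤ (P B).toReal + (P C).toReal + (P D).toReal := by
  have h1 : P A ≤ P (B ∪ C) + P D := le_trans (measure_mono h) (measure_union_le _ _)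
  have h2 : P (B ∪ C) ≤ P B + P C := measure_union_le _ _
  have := ENNReal.toReal_mono (by finiteness) (le_trans h1 (add_le_add_left h2 _))
  rwa [ENNReal.toReal_add (by finiteness) (by finiteness),
    ENNReal.toReal_add (by finiteness) (by finiteness)] at this

end helpers

set_option maxHeartbeats 1000000 in
/-- **Rootzén.** Let `{X_n}` have a 1-max-regenerative structure, with
regeneration times `0 < S 0 < S 1 < ⋯` (and `S_{-1} := 0`), cycle lengths
`Y n = S n - S (n-1)` independent and identically distributed for `n ≥ 1`, and cycle
maxima `ζ n` (the largest value of `X` on `[S (n-1), S n)`) independent and identically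
distributed for `n ≥ 1`.  Assume `μ = E[Y 1] < ∞` and
`P(ζ 0 > max_{1 ≤ k ≤ n} ζ k) → 0`.  With `G(x) = P(ζ 1 ≤ x)^{1/μ}`,
`sup_x |P(M_n ≤ x) - G(x)^n| → 0` as `n → ∞`, where `M_n = max {X_k : 1 ≤ k ≤ n}`. -/
theorem regenerative_phantom_distribution
    {Ω : Type*} [MeasurableSpace Ω] (P : Measure Ω) [IsProbabilityMeasure P]
    (X : ℕ → Ω → ℝ) (S : ℕ → Ω → ℕ)
    (hXmeas : ∀ n, Measurable (X n)) (hSmeas : ∀ n, Measurable (S n))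
    (hS0 : ∀ ω, 0 < S 0 ω)
    (hSmono : ∀ ω, StrictMono (fun n => S n ω))
    (Y : ℕ → Ω → ℕ)
    (hY : ∀ n ω, Y n ω = S n ω - (if n = 0 then 0 else S (n - 1) ω))
    (ζ : ℕ → Ω → EReal)
    (hζ : ∀ n ω,
      ζ n ω = blockStat (fun k => X k ω) (if n = 0 then 0 else S (n - 1) ω) (S n ω) 0)
    (hYindep : iIndepFun Y P)
    (hYid : ∀ n, 1 ≤ n → IdentDistrib (Y n) (Y 1) P P)
    (hζindep : iIndepFun ζ P)
    (hζid : ∀ n, 1 ≤ n → IdentDistrib (ζ n) (ζ 1) P P)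
    (hYint : Integrable (fun ω => (Y 1 ω : ℝ)) P)
    (μ : ℝ) (hμ : μ = ∫ ω, (Y 1 ω : ℝ) ∂P)
    (hC0 : Tendsto (fun n : ℕ => P {ω | ∀ k, 1 ≤ k → k ≤ n → ζ k ω < ζ 0 ω})
      atTop (nhds 0))
    (G : ℝ → ℝ) (hG : ∀ x : ℝ, G x = (P {ω | ζ 1 ω ≤ (x : EReal)}).toReal ^ (1 / μ)) :
    Tendsto
      (fun n : ℕ =>
        ⨆ x : ℝ,
          |(P {ω | blockStat (fun k => X k ω) 1 (n + 1) 0 ≤ (x : EReal)}).toReal -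
            G x ^ n|)
      atTop (nhds 0) := by
  -- Notation
  set F : ℝ → ℝ := fun x => (P {ω | ζ 1 ω ≤ (x : EReal)}).toReal with hF
  set T : ℕ → ℝ → ℝ := fun n x =>
    (P {ω | blockStat (fun k => X k ω) 1 (n + 1) 0 ≤ (x : EReal)}).toReal with hT
  have hF0 : ∀ x, 0 ≤ F x := fun x => ENNReal.toReal_nonneg
  have hF1 : ∀ x, F x ≤ 1 := fun x => prob_toReal_le_one P _
  -- μ ≥ 1
  have hμ1 : 1 ≤ μ := by
    have hY1 : ∀ ω, (1:ℝ) ≤ (Y 1 ω : ℝ) := by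
      intro ω
      have h01 : S 0 ω < S 1 ω := hSmono ω (by norm_num)
      have h := hY 1 ω
      simp only [one_ne_zero, if_false, Nat.sub_self] at h
      have : 1 ≤ Y 1 ω := by omega
      exact_mod_cast this
    rw [hμ]
    calc (1:ℝ) = ∫ _, (1:ℝ) ∂P := by simp
      _ ≤ ∫ ω, (Y 1 ω : ℝ) ∂P := integral_mono (integrable_const 1) hYint hY1
  have hμ0 : 0 < μ := by linarith
  -- telescoping
  have hSsum : ∀ ω m, (S m ω : ℝ) = (S 0 ω : ℝ) + ∑ i ∈ Finset.range m, (Y (i+1) ω : ℝ) := by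
    intro ω m
    induction m with
    | zero => simp
    | succ m ih =>
      rw [Finset.sum_range_succ, ← add_assoc, ← ih]
      have hmono : S m ω ≤ S (m+1) ω := (hSmono ω (Nat.lt_succ_self m)).le
      have := hY (m+1) ω
      simp only [Nat.add_sub_cancel, if_neg (Nat.succ_ne_zero m)] at this
      have : S (m+1) ω = S m ω + Y (m+1) ω := by omega
      rw [this]
      push_cast
      ring
  -- strong law
  have hLLN : ∀ᵐ ω ∂P, Tendsto (fun m => (S m ω : ℝ) / m) atTop (𝓝 μ) := by
    have hZindep : Pairwise (Function.onFun (IndepFun · · P) (fun i ω => (Y (i+1) ω : ℝ))) := by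
      intro i j hij
      have h1 : IndepFun (Y (i+1)) (Y (j+1)) P := hYindep.indepFun (by omega)
      exact h1.comp measurable_from_top measurable_from_top
    have hZid : ∀ i, IdentDistrib (fun ω => (Y (i+1) ω : ℝ)) (fun ω => (Y (0+1) ω : ℝ)) P P := by
      intro i
      exact ((hYid (i+1) (by omega)).trans (hYid (0+1) (by omega)).symm).comp
        measurable_from_top
    have hslln := strong_law_ae_real (fun i ω => (Y (i+1) ω : ℝ)) hYint hZindep hZid
    filter_upwards [hslln] with ω hω
    have h0 : Tendsto (fun m : ℕ => (S 0 ω : ℝ) / m) atTop (𝓝 0) :=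
      tendsto_const_div_atTop_nhds_zero_nat _
    have hμ' : (P[fun ω => (Y (0+1) ω : ℝ)]) = μ := by rw [hμ]
    rw [hμ'] at hω
    have := h0.add hω
    rw [zero_add] at this
    refine this.congr fun m => ?_
    rw [hSsum ω m, add_div]
  -- convergence in probability
  have hq : ∀ η : ℝ, 0 < η →
      Tendsto (fun m => (P {ω | η ≤ |(S m ω : ℝ) / m - μ|}).toReal) atTop (𝓝 0) := by
    intro η hη
    have hmeas : ∀ m : ℕ, AEStronglyMeasurable (fun ω => (S m ω : ℝ) / m) P := by
      intro m
      exact ((measurable_from_top.comp (hSmeas m)).div_const _).aestronglyMeasurable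
    have htim : TendstoInMeasure P (fun m ω => (S m ω : ℝ) / m) atTop (fun _ => μ) :=
      tendstoInMeasure_of_tendsto_ae hmeas hLLN
    have := tendstoInMeasure_iff_dist.1 htim η hη
    simp only [Real.dist_eq] at this
    exact (ENNReal.tendsto_toReal ENNReal.zero_ne_top).comp this
  -- product formula
  have hprod : ∀ (x : ℝ) (m : ℕ),
      P {ω | ∀ k, 1 ≤ k → k ≤ m → ζ k ω ≤ (x : EReal)} = (P {ω | ζ 1 ω ≤ (x : EReal)}) ^ m := by
    intro x m
    have hset : {ω | ∀ k, 1 ≤ k → k ≤ m → ζ k ω ≤ (x : EReal)}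
        = ⋂ k ∈ Finset.Icc 1 m, ζ k ⁻¹' (Set.Iic (x : EReal)) := by
      ext ω
      simp only [Set.mem_setOf_eq, Set.mem_iInter, Set.mem_preimage, Set.mem_Iic,
        Finset.mem_Icc]
      exact ⟨fun h k hk => h k hk.1 hk.2, fun h k h1 h2 => h k ⟨h1, h2⟩⟩
    rw [hset, hζindep.meas_biInter (fun i _ => ⟨Set.Iic (x : EReal), measurableSet_Iic, rfl⟩)]
    have heq : ∀ k ∈ Finset.Icc 1 m,
        P (ζ k ⁻¹' Set.Iic (x : EReal)) = P {ω | ζ 1 ω ≤ (x : EReal)} := by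
      intro k hk
      have := (hζid k (Finset.mem_Icc.1 hk).1).measure_mem_eq
        (measurableSet_Iic (a := (x : EReal)))
      exact this
    rw [Finset.prod_congr rfl heq, Finset.prod_const]
    congr 1
    simp [Nat.card_Icc]
  -- inclusion: upper
  have inc1 : ∀ (n m : ℕ) (x : ℝ),
      {ω | blockStat (fun k => X k ω) 1 (n + 1) 0 ≤ (x : EReal)} ∩ {ω | S m ω ≤ n + 1}
        ⊆ {ω | ∀ k, 1 ≤ k → k ≤ m → ζ k ω ≤ (x : EReal)} := by
    intro n m x ω hω
    obtain ⟨h1, h2⟩ := hω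
    intro k hk1 hkm
    rw [hζ k ω]
    simp only [if_neg (by omega : ¬ k = 0)]
    rw [blockStat_zero_le_iff]
    intro j hj1 hj2
    have hb := (blockStat_zero_le_iff (fun k => X k ω) 1 (n+1) (x : EReal)).1 h1
    have hmono0 : S 0 ω ≤ S (k-1) ω := (hSmono ω).monotone (Nat.zero_le _)
    have hmonok : S k ω ≤ S m ω := (hSmono ω).monotone hkm
    have hs0 := hS0 ω
    have h2' : S m ω ≤ n + 1 := h2
    exact hb j (by omega) (by omega)
  -- inclusion: lower (cover)
  have inc2 : ∀ (n m : ℕ) (x : ℝ),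
      {ω | ∀ k, k ≤ m → ζ k ω ≤ (x : EReal)} ∩ {ω | n + 1 ≤ S m ω}
        ⊆ {ω | blockStat (fun k => X k ω) 1 (n + 1) 0 ≤ (x : EReal)} := by
    intro n m x ω hω
    obtain ⟨h1, h2⟩ := hω
    have h2' : n + 1 ≤ S m ω := h2
    show blockStat (fun k => X k ω) 1 (n + 1) 0 ≤ (x : EReal)
    rw [blockStat_zero_le_iff]
    intro j hj1 hjn
    have hjm : j < S m ω := by omega
    have hex : ∃ k, j < S k ω := ⟨m, hjm⟩
    have hks : j < S (Nat.find hex) ω := Nat.find_spec hex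
    have hkm : Nat.find hex ≤ m := Nat.find_le hjm
    have hζk := h1 (Nat.find hex) hkm
    rw [hζ (Nat.find hex) ω] at hζk
    rcases Nat.eq_zero_or_pos (Nat.find hex) with hk0 | hk0
    · rw [hk0] at hζk hks
      simp only [if_pos rfl] at hζk
      exact (blockStat_zero_le_iff _ _ _ _).1 hζk j (Nat.zero_le _) hks
    · have hmin : ¬ j < S (Nat.find hex - 1) ω := Nat.find_min hex (by omega)
      simp only [if_neg (by omega : ¬ Nat.find hex = 0)] at hζk
      exact (blockStat_zero_le_iff _ _ _ _).1 hζk j (by omega) hks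
  -- inclusion: zeta0
  have inc3 : ∀ (m : ℕ) (x : ℝ),
      {ω | ∀ k, 1 ≤ k → k ≤ m → ζ k ω ≤ (x : EReal)}
        ⊆ {ω | ∀ k, k ≤ m → ζ k ω ≤ (x : EReal)} ∪ {ω | ∀ k, 1 ≤ k → k ≤ m → ζ k ω < ζ 0 ω} := by
    intro m x ω hω
    by_cases h0 : ζ 0 ω ≤ (x : EReal)
    · left
      intro k hk
      rcases Nat.eq_zero_or_pos k with rfl | hk1
      · exact h0
      · exact hω k hk1 hk
    · right
      intro k hk1 hkm
      exact lt_of_le_of_lt (hω k hk1 hkm) (lt_of_not_ge h0)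
  -- probability bounds
  have up : ∀ (n m : ℕ) (x : ℝ),
      T n x ≤ F x ^ m + (P {ω | n + 2 ≤ S m ω}).toReal := by
    intro n m x
    have hsub : {ω | blockStat (fun k => X k ω) 1 (n + 1) 0 ≤ (x : EReal)}
        ⊆ {ω | ∀ k, 1 ≤ k → k ≤ m → ζ k ω ≤ (x : EReal)} ∪ {ω | n + 2 ≤ S m ω} := by
      intro ω hω
      by_cases hS : S m ω ≤ n + 1
      · left; exact inc1 n m x ⟨hω, hS⟩
      · right; show n + 2 ≤ S m ω; omega
    have hle := prob_le_add2 P _ _ _ hsub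
    rw [hprod x m, ENNReal.toReal_pow] at hle
    exact hle
  have lo : ∀ (n m : ℕ) (x : ℝ),
      F x ^ m - (P {ω | ∀ k, 1 ≤ k → k ≤ m → ζ k ω < ζ 0 ω}).toReal
        - (P {ω | S m ω ≤ n}).toReal ≤ T n x := by
    intro n m x
    have hsub : {ω | ∀ k, 1 ≤ k → k ≤ m → ζ k ω ≤ (x : EReal)}
        ⊆ {ω | blockStat (fun k => X k ω) 1 (n + 1) 0 ≤ (x : EReal)}
          ∪ {ω | ∀ k, 1 ≤ k → k ≤ m → ζ k ω < ζ 0 ω} ∪ {ω | S m ω ≤ n} := by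
      intro ω hω
      by_cases hS : n + 1 ≤ S m ω
      · rcases inc3 m x hω with h | h
        · left; left; exact inc2 n m x ⟨h, hS⟩
        · left; right; exact h
      · right; show S m ω ≤ n; omega
    have hle := prob_le_add3 P _ _ _ _ hsub
    rw [hprod x m, ENNReal.toReal_pow] at hle
    linarith
  -- G power
  have hGn : ∀ (x : ℝ) (n : ℕ), G x ^ n = F x ^ ((n : ℝ) / μ) := by
    intro x n
    rw [hG x, ← Real.rpow_natCast ((P {ω | ζ 1 ω ≤ (x : EReal)}).toReal ^ (1 / μ)) n,
      ← Real.rpow_mul ENNReal.toReal_nonneg]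
    congr 1
    field_simp
  -- boundedness of the summand
  have habs_le : ∀ (n : ℕ) (x : ℝ), |T n x - G x ^ n| ≤ 2 := by
    intro n x
    have h1 : 0 ≤ T n x := ENNReal.toReal_nonneg
    have h2 : T n x ≤ 1 := prob_toReal_le_one P _
    have hG0 : 0 ≤ G x := by rw [hG]; positivity
    have hG1 : G x ≤ 1 := by
      rw [hG]
      exact Real.rpow_le_one ENNReal.toReal_nonneg (prob_toReal_le_one P _) (by positivity)
    have h3 : 0 ≤ G x ^ n := pow_nonneg hG0 n
    have h4 : G x ^ n ≤ 1 := pow_le_one₀ hG0 hG1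
    rw [abs_le]
    constructor <;> linarith
  have hsup_nonneg : ∀ n : ℕ, 0 ≤ ⨆ x : ℝ, |T n x - G x ^ n| := by
    intro n
    have hbdd : BddAbove (Set.range fun x : ℝ => |T n x - G x ^ n|) := by
      refine ⟨2, ?_⟩
      rintro _ ⟨x, rfl⟩
      exact habs_le n x
    exact le_trans (abs_nonneg _) (le_ciSup hbdd 0)
  refine tendsto_order.2
    ⟨fun a ha => Eventually.of_forall fun n => lt_of_lt_of_le ha (hsup_nonneg n), ?_⟩
  intro ε hε
  set ε₂ : ℝ := min (ε / 16) (1 / 2) with hε₂def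
  have hε₂pos : 0 < ε₂ := lt_min (by linarith) (by norm_num)
  have hε₂half : ε₂ ≤ 1 / 2 := min_le_right _ _
  have hε₂ε : ε₂ ≤ ε / 16 := min_le_left _ _
  set mlo : ℕ → ℕ := fun n => ⌊(1 - ε₂) * n / μ⌋₊ with hmlodef
  set mhi : ℕ → ℕ := fun n => ⌈(1 + ε₂) * n / μ⌉₊ with hmhidef
  have hinner_lo : Tendsto (fun n : ℕ => (1 - ε₂) * n / μ) atTop atTop :=
    ((tendsto_natCast_atTop_atTop (R := ℝ)).const_mul_atTop
      (by linarith : (0:ℝ) < 1 - ε₂)).atTop_div_const hμ0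
  have hinner_hi : Tendsto (fun n : ℕ => (1 + ε₂) * n / μ) atTop atTop :=
    ((tendsto_natCast_atTop_atTop (R := ℝ)).const_mul_atTop
      (by linarith : (0:ℝ) < 1 + ε₂)).atTop_div_const hμ0
  have hmloat : Tendsto mlo atTop atTop := tendsto_nat_floor_atTop.comp hinner_lo
  have hmhiat : Tendsto mhi atTop atTop := tendsto_nat_ceil_atTop.comp hinner_hi
  have hη : 0 < μ * ε₂ / 2 := by positivity
  have hp1' : Tendsto
      (fun n => (P {ω | μ * ε₂ / 2 ≤ |(S (mlo n) ω : ℝ) / (mlo n) - μ|}).toReal)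
      atTop (𝓝 0) := (hq _ hη).comp hmloat
  have hp2' : Tendsto
      (fun n => (P {ω | μ * ε₂ / 2 ≤ |(S (mhi n) ω : ℝ) / (mhi n) - μ|}).toReal)
      atTop (𝓝 0) := (hq _ hη).comp hmhiat
  have hp3' : Tendsto
      (fun n => (P {ω | ∀ k, 1 ≤ k → k ≤ mhi n → ζ k ω < ζ 0 ω}).toReal)
      atTop (𝓝 0) := ((ENNReal.tendsto_toReal ENNReal.zero_ne_top).comp hC0).comp hmhiat
  obtain ⟨N₁, hN₁⟩ := exists_nat_gt (μ * (8 / ε₂))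
  have hdet : ∀ᶠ n : ℕ in atTop, 8 / ε₂ ≤ (n : ℝ) / μ := by
    filter_upwards [eventually_ge_atTop N₁] with n hn
    have hn' : (N₁ : ℝ) ≤ n := by exact_mod_cast hn
    rw [le_div_iff₀ hμ0]
    nlinarith
  filter_upwards [hp1'.eventually_lt_const (by positivity : (0:ℝ) < ε / 16),
    hp2'.eventually_lt_const (by positivity : (0:ℝ) < ε / 16),
    hp3'.eventually_lt_const (by positivity : (0:ℝ) < ε / 16), hdet] with n h1 h2 h3 h4
  set a : ℝ := (n : ℝ) / μ with hadef
  have ha0 : 0 < a := lt_of_lt_of_le (by positivity) h4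
  have hna : (n : ℝ) = a * μ := by rw [hadef]; field_simp
  have ha16 : 16 ≤ a := by
    refine le_trans ?_ h4
    rw [le_div_iff₀ hε₂pos]
    linarith
  have haε : 8 ≤ a * ε₂ := by
    rw [div_le_iff₀ hε₂pos] at h4
    linarith
  have harg0 : 0 ≤ (1 - ε₂) * (n : ℝ) / μ := by
    apply div_nonneg _ hμ0.le
    exact mul_nonneg (by linarith) (Nat.cast_nonneg n)
  have heqlo : (1 - ε₂) * (n : ℝ) / μ = (1 - ε₂) * a := by rw [hadef]; ring
  have heqhi : (1 + ε₂) * (n : ℝ) / μ = (1 + ε₂) * a := by rw [hadef]; ring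
  have hlo_le : (mlo n : ℝ) ≤ (1 - ε₂) * a := by
    rw [← heqlo]; exact Nat.floor_le harg0
  have hlo_gt : (1 - ε₂) * a - 1 < (mlo n : ℝ) := by
    have h : (1 - ε₂) * (n : ℝ) / μ < (mlo n : ℝ) + 1 := Nat.lt_floor_add_one _
    rw [heqlo] at h
    linarith
  have hhi_ge : (1 + ε₂) * a ≤ (mhi n : ℝ) := by
    rw [← heqhi]; exact Nat.le_ceil _
  have hhi_lt : (mhi n : ℝ) < (1 + ε₂) * a + 1 := by
    rw [← heqhi]
    exact Nat.ceil_lt_add_one (by rw [heqhi]; positivity)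
  have hmlo_pos : (0 : ℝ) < (mlo n : ℝ) := by nlinarith
  have hmhi_pos : (0 : ℝ) < (mhi n : ℝ) := by nlinarith
  have hmlo_le_a : (mlo n : ℝ) ≤ a := by nlinarith
  have hhi_ge_a : a ≤ (mhi n : ℝ) := le_trans (by nlinarith) hhi_ge
  have hd1 : (a - (mlo n : ℝ)) / (mlo n : ℝ) ≤ 5 * ε₂ := by
    rw [div_le_iff₀ hmlo_pos]
    nlinarith [mul_pos hε₂pos ha0]
  have hd2 : ((mhi n : ℝ) - a) / a ≤ 2 * ε₂ := by
    rw [div_le_iff₀ ha0]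
    nlinarith
  -- transfer of the probability error terms
  have hP1 : (P {ω | n + 2 ≤ S (mlo n) ω}).toReal
      ≤ (P {ω | μ * ε₂ / 2 ≤ |(S (mlo n) ω : ℝ) / (mlo n) - μ|}).toReal := by
    apply ENNReal.toReal_mono (by finiteness)
    apply measure_mono
    intro ω hω
    have hω' : (n : ℝ) + 2 ≤ (S (mlo n) ω : ℝ) := by exact_mod_cast hω
    show μ * ε₂ / 2 ≤ |(S (mlo n) ω : ℝ) / (mlo n) - μ|
    have hdiv : μ + μ * ε₂ / 2 ≤ (S (mlo n) ω : ℝ) / (mlo n : ℝ) := by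
      rw [le_div_iff₀ hmlo_pos]
      nlinarith [mul_le_mul_of_nonneg_left hlo_le (by positivity : (0:ℝ) ≤ μ + μ * ε₂ / 2)]
    have : μ * ε₂ / 2 ≤ (S (mlo n) ω : ℝ) / (mlo n : ℝ) - μ := by linarith
    exact le_trans this (le_abs_self _)
  have hP2 : (P {ω | S (mhi n) ω ≤ n}).toReal
      ≤ (P {ω | μ * ε₂ / 2 ≤ |(S (mhi n) ω : ℝ) / (mhi n) - μ|}).toReal := by
    apply ENNReal.toReal_mono (by finiteness)
    apply measure_mono
    intro ω hω
    have hω' : (S (mhi n) ω : ℝ) ≤ (n : ℝ) := by exact_mod_cast hω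
    show μ * ε₂ / 2 ≤ |(S (mhi n) ω : ℝ) / (mhi n) - μ|
    have hdiv : (S (mhi n) ω : ℝ) / (mhi n : ℝ) ≤ μ - μ * ε₂ / 2 := by
      rw [div_le_iff₀ hmhi_pos]
      nlinarith [mul_le_mul_of_nonneg_left hhi_ge (by positivity : (0:ℝ) ≤ μ * ε₂ / 2),
        mul_pos hε₂pos (mul_pos hε₂pos ha0), mul_pos hμ0 (mul_pos hε₂pos ha0)]
    have : μ * ε₂ / 2 ≤ -((S (mhi n) ω : ℝ) / (mhi n : ℝ) - μ) := by linarith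
    exact le_trans this (neg_le_abs _)
  -- per-x estimate
  have key : ∀ x : ℝ, |T n x - G x ^ n| ≤ 7 * ε₂ + 3 * (ε / 16) := by
    intro x
    have hup := up n (mlo n) x
    have hlo' := lo n (mhi n) x
    have hrwlo : F x ^ (mlo n) = F x ^ ((mlo n : ℝ)) := (Real.rpow_natCast _ _).symm
    have hrwhi : F x ^ (mhi n) = F x ^ ((mhi n : ℝ)) := (Real.rpow_natCast _ _).symm
    have hgap1 : F x ^ ((mlo n : ℝ)) - F x ^ a ≤ (a - (mlo n : ℝ)) / (mlo n : ℝ) :=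
      rpow_gap (hF0 x) (hF1 x) hmlo_pos hmlo_le_a
    have hgap2 : F x ^ a - F x ^ ((mhi n : ℝ)) ≤ ((mhi n : ℝ) - a) / a :=
      rpow_gap (hF0 x) (hF1 x) ha0 hhi_ge_a
    have hGna : G x ^ n = F x ^ a := by rw [hGn x n, hadef]
    rw [hrwlo] at hup
    rw [hrwhi] at hlo'
    rw [abs_le]
    constructor
    · have := le_trans hP2 h2.le
      linarith [hgap2, hd2, h3, hlo']
    · have := le_trans hP1 h1.le
      linarith [hgap1, hd1, hup]
  have hsup_le : (⨆ x : ℝ, |T n x - G x ^ n|) ≤ 7 * ε₂ + 3 * (ε / 16) := ciSup_le key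
  refine lt_of_le_of_lt hsup_le ?_
  linarith
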